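/- Let G be a connected groupoid with finitely many arrows and a finite nonempty set Ω of objects. Then for every object x of G, the total number of arrows of G equals |Ω| times the number of arrows with source x: |Arr(G)| = |Ω| · |{α ∈ Arr(G) : s(α) = x}|. -/

import Mathlib

open CategoryTheory
open scoped ComplexOrder Classical

universe u

/-- The set of arrows of a groupoid with object type `Ω`. -/
abbrev GArrow (Ω : Type u) [Groupoid Ω] : Type u := Σ x y : Ω, x ⟶ y

namespace GArrow

variable {Ω : Type u} [Groupoid Ω]

/-- Source of an arrow. -/
def src (α : GArrow Ω) : Ω := α.1

/-- Target of an arrow. -/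
def tgt (α : GArrow Ω) : Ω := α.2.1

/-- Inverse of an arrow. -/
def inv (α : GArrow Ω) : GArrow Ω := ⟨α.2.1, α.1, Groupoid.inv α.2.2⟩

/-- The identity arrow at an object. -/
def id (x : Ω) : GArrow Ω := ⟨x, x, 𝟙 x⟩

/-- The composite `α ∘ β` (first apply `β`, then `α`), defined when `t(β) = s(α)`. -/
def comp (α β : GArrow Ω) (h : β.tgt = α.src) : GArrow Ω :=
  ⟨β.1, α.2.1, (β.2.2 ≫ eqToHom h) ≫ α.2.2⟩

/-- The composite `α⁻¹ ∘ β`, defined when `t(α) = t(β)`. -/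
def invComp (α β : GArrow Ω) (h : α.tgt = β.tgt) : GArrow Ω :=
  ⟨β.1, α.1, (β.2.2 ≫ eqToHom h.symm) ≫ Groupoid.inv α.2.2⟩

end GArrow

/-- A function on the arrows of a groupoid is positive semi-definite if for all
`ξ : Fin n → ℂ` and arrows `α : Fin n → GArrow Ω`, the sum over pairs `(i, j)` with
`t(α i) = t(α j)` of `conj (ξ i) * ξ j * φ ((α i)⁻¹ ∘ α j)` is a nonnegative real number. -/
def IsPosSemidefFun {Ω : Type u} [Groupoid Ω] (φ : GArrow Ω → ℂ) : Prop :=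
  ∀ (n : ℕ) (ξ : Fin n → ℂ) (α : Fin n → GArrow Ω),
    0 ≤ ∑ i, ∑ j,
      if h : (α i).tgt = (α j).tgt then
        (starRingEnd ℂ) (ξ i) * ξ j * φ (GArrow.invComp (α i) (α j) h)
      else 0

/-- The convolution product on complex functions on the arrows of a finite groupoid. -/
noncomputable def conv {Ω : Type u} [Groupoid Ω] [Fintype Ω] [∀ x y : Ω, Fintype (x ⟶ y)]
    (f g : GArrow Ω → ℂ) (γ : GArrow Ω) : ℂ :=
  ∑ α : GArrow Ω, ∑ β : GArrow Ω,
    if h : β.tgt = α.src then (if GArrow.comp α β h = γ then f α * g β else 0) else 0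

/-- The involution `f*(α) = conj (f (α⁻¹))` on functions on arrows. -/
def starFun {Ω : Type u} [Groupoid Ω] (f : GArrow Ω → ℂ) (α : GArrow Ω) : ℂ :=
  (starRingEnd ℂ) (f (GArrow.inv α))

/-- The unit of the convolution algebra: the indicator of the set of identity arrows. -/
noncomputable def convOne {Ω : Type u} [Groupoid Ω] (γ : GArrow Ω) : ℂ :=
  if γ = GArrow.id γ.src then 1 else 0

/-- The indicator function of a single arrow. -/
noncomputable def delta {Ω : Type u} [Groupoid Ω] (α : GArrow Ω) (β : GArrow Ω) : ℂ :=
  if β = α then 1 else 0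

/-- For a connected groupoid with finitely many arrows and a finite nonempty set of
objects, the total number of arrows equals the number of objects times the number of
arrows with source any fixed object `x`. -/
theorem card_arrows_eq_card_objects_mul {Ω : Type u} [Groupoid Ω] [Fintype Ω] [Nonempty Ω]
    [∀ x y : Ω, Fintype (x ⟶ y)]
    (hconn : ∀ x y : Ω, Nonempty (x ⟶ y)) (x : Ω) :
    Fintype.card (GArrow Ω) =
      Fintype.card Ω * Fintype.card {α : GArrow Ω // α.src = x} := by
  classical
  -- `{α // α.src = x} ≃ Σ y, x ⟶ y`
  have e1 : {α : GArrow Ω // α.src = x} ≃ (Σ y : Ω, x ⟶ y) :=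
    { toFun := fun p => ⟨p.1.2.1, eqToHom p.2.symm ≫ p.1.2.2⟩
      invFun := fun q => ⟨⟨x, q.1, q.2⟩, rfl⟩
      left_inv := by rintro ⟨⟨a, b, f⟩, h⟩; cases h; simp [GArrow.src]; exact Subtype.ext (congrArg (fun g => (⟨a, b, g⟩ : GArrow Ω)) (Category.id_comp f))
      right_inv := by rintro ⟨y, f⟩; simp; exact Category.id_comp f }
  have key : ∀ z : Ω, Fintype.card (Σ y : Ω, z ⟶ y) = Fintype.card (Σ y : Ω, x ⟶ y) := by
    intro z
    obtain ⟨f⟩ := hconn x z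
    exact Fintype.card_congr (Equiv.sigmaCongrRight fun y =>
      { toFun := fun g => f ≫ g
        invFun := fun g => Groupoid.inv f ≫ g
        left_inv := fun g => by simp
        right_inv := fun g => by simp })
  have e2 : GArrow Ω ≃ (Σ z : Ω, Σ y : Ω, z ⟶ y) := Equiv.refl _
  rw [Fintype.card_congr e2, Fintype.card_sigma, Fintype.card_congr e1]
  simp [key, Finset.sum_const, mul_comm]
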